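/- For each C ≥ 1, the function q_C : ℝ → ℝ given by q_C(x) = 2·e^{−2x²} / ( √(2π) · ( erf(√2·x) + C ) ) is well-defined (the denominator is strictly positive for all x) and satisfies the Riccati equation q_C'(x) = −2·q_C(x)·( 2x + q_C(x) ) for every x ∈ ℝ. -/

import Mathlib

open Real MeasureTheory Set

/-- The Gauss error function `erf(u) = (2/√π) ∫₀ᵘ e^{−s²} ds`. -/
noncomputable def erf (u : ℝ) : ℝ :=
  (2 / Real.sqrt π) * ∫ s in (0:ℝ)..u, Real.exp (-s ^ 2)


lemma gint : Integrable (fun s : ℝ => Real.exp (-s ^ 2)) := by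
  simpa using integrable_exp_neg_mul_sq (one_pos)

lemma gIoi : ∫ s in Ioi (0:ℝ), Real.exp (-s ^ 2) = Real.sqrt π / 2 := by
  simpa using integral_gaussian_Ioi 1

lemma int_lt (u : ℝ) : (∫ s in (0:ℝ)..u, Real.exp (-s ^ 2)) < Real.sqrt π / 2 := by
  rcases le_or_gt u 0 with hu | hu
  · have h1 : (∫ s in (0:ℝ)..u, Real.exp (-s ^ 2)) ≤ 0 := by
      rw [intervalIntegral.integral_symm u 0]
      exact neg_nonpos.2 (intervalIntegral.integral_nonneg hu fun s _ => (Real.exp_pos _).le)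
    exact h1.trans_lt (by positivity)
  · have hsplit : ∫ s in Ioi (0:ℝ), Real.exp (-s ^ 2)
        = (∫ s in Ioc (0:ℝ) u, Real.exp (-s ^ 2)) + ∫ s in Ioi u, Real.exp (-s ^ 2) := by
      rw [← setIntegral_union (by simp [Set.disjoint_left]) measurableSet_Ioi
        gint.integrableOn gint.integrableOn, Ioc_union_Ioi_eq_Ioi hu.le]
    have hpos : 0 < ∫ s in Ioi u, Real.exp (-s ^ 2) := by
      rw [setIntegral_pos_iff_support_of_nonneg_ae
        (Filter.Eventually.of_forall fun s => (Real.exp_pos _).le) gint.integrableOn]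
      have : Function.support (fun s : ℝ => Real.exp (-s ^ 2)) = Set.univ := by
        ext s; simp [Function.mem_support, (Real.exp_pos _).ne']
      simp [this]
    rw [intervalIntegral.integral_of_le hu.le, ← gIoi]
    linarith

lemma int_gt (u : ℝ) : -(Real.sqrt π / 2) < ∫ s in (0:ℝ)..u, Real.exp (-s ^ 2) := by
  have h : (∫ s in (0:ℝ)..(-u), Real.exp (-s ^ 2)) = -∫ s in (0:ℝ)..u, Real.exp (-s ^ 2) := by
    have := intervalIntegral.integral_comp_neg (a := (0:ℝ)) (b := -u)
      (fun s => Real.exp (-s ^ 2))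
    simp only [neg_neg, neg_zero, neg_sq] at this ⊢
    rw [this, intervalIntegral.integral_symm]
  have := int_lt (-u)
  rw [h] at this
  linarith

lemma erf_add_pos (C : ℝ) (hC : 1 ≤ C) (u : ℝ) : 0 < erf u + C := by
  have h := int_gt u
  have hπ : 0 < Real.sqrt π := Real.sqrt_pos.2 Real.pi_pos
  have : -1 < erf u := by
    have : (2 / Real.sqrt π) * (-(Real.sqrt π / 2)) < (2 / Real.sqrt π) *
        ∫ s in (0:ℝ)..u, Real.exp (-s ^ 2) :=
      mul_lt_mul_of_pos_left h (by positivity)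
    calc (-1 : ℝ) = (2 / Real.sqrt π) * (-(Real.sqrt π / 2)) := by field_simp
      _ < erf u := this
  linarith

lemma erf_hasDerivAt (u : ℝ) :
    HasDerivAt erf ((2 / Real.sqrt π) * Real.exp (-u ^ 2)) u := by
  have h : HasDerivAt (fun v => ∫ s in (0:ℝ)..v, Real.exp (-s ^ 2))
      (Real.exp (-u ^ 2)) u :=
    intervalIntegral.integral_hasDerivAt_right gint.intervalIntegrable
      (Continuous.stronglyMeasurableAtFilter (by continuity) _ _)
      (Continuous.continuousAt (by continuity))
  exact h.const_mul _


/-- For `C ≥ 1` the function `q_C(x) = 2e^{−2x²}/(√(2π)(erf(√2 x) + C))` is well-defined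
(the denominator is positive) and solves the Riccati equation
`q_C'(x) = −2 q_C(x) (2x + q_C(x))`. -/
theorem stmt8 (C : ℝ) (hC : 1 ≤ C) :
    (∀ x : ℝ, 0 < Real.sqrt (2 * π) * (erf (Real.sqrt 2 * x) + C)) ∧
    (∀ x : ℝ,
      HasDerivAt
        (fun x : ℝ =>
          2 * Real.exp (-(2 * x ^ 2)) / (Real.sqrt (2 * π) * (erf (Real.sqrt 2 * x) + C)))
        (-2 * (2 * Real.exp (-(2 * x ^ 2)) / (Real.sqrt (2 * π) * (erf (Real.sqrt 2 * x) + C))) *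
          (2 * x +
            2 * Real.exp (-(2 * x ^ 2)) / (Real.sqrt (2 * π) * (erf (Real.sqrt 2 * x) + C))))
        x) := by
  have hden : ∀ x : ℝ, 0 < Real.sqrt (2 * π) * (erf (Real.sqrt 2 * x) + C) := fun x =>
    mul_pos (Real.sqrt_pos.2 (by positivity)) (erf_add_pos C hC _)
  refine ⟨hden, fun x => ?_⟩
  set e := Real.exp (-(2 * x ^ 2)) with he
  have hsq : (Real.sqrt 2 * x) ^ 2 = 2 * x ^ 2 := by
    rw [mul_pow, Real.sq_sqrt (by norm_num : (2:ℝ) ≥ 0)]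
  -- numerator derivative
  have hinner : HasDerivAt (fun x : ℝ => -(2 * x ^ 2)) (-(4 * x)) x := by
    have h := ((hasDerivAt_pow 2 x).const_mul (2:ℝ)).neg
    exact h.congr_deriv (by ring)
  have hN : HasDerivAt (fun x : ℝ => 2 * Real.exp (-(2 * x ^ 2)))
      (2 * (Real.exp (-(2 * x ^ 2)) * -(4 * x))) x :=
    ((Real.hasDerivAt_exp _).comp x hinner).const_mul 2
  -- denominator derivative
  have hlin : HasDerivAt (fun x : ℝ => Real.sqrt 2 * x) (Real.sqrt 2) x := by
    simpa using (hasDerivAt_id x).const_mul (Real.sqrt 2)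
  have hErf : HasDerivAt (fun x : ℝ => erf (Real.sqrt 2 * x))
      ((2 / Real.sqrt π) * Real.exp (-(Real.sqrt 2 * x) ^ 2) * Real.sqrt 2) x :=
    (erf_hasDerivAt _).comp x hlin
  have hD : HasDerivAt (fun x : ℝ => Real.sqrt (2 * π) * (erf (Real.sqrt 2 * x) + C))
      (Real.sqrt (2 * π) * ((2 / Real.sqrt π) * Real.exp (-(Real.sqrt 2 * x) ^ 2) * Real.sqrt 2))
      x := by
    simpa using ((hErf.add_const C).const_mul (Real.sqrt (2 * π)))
  have hD' : Real.sqrt (2 * π) *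
      ((2 / Real.sqrt π) * Real.exp (-(Real.sqrt 2 * x) ^ 2) * Real.sqrt 2) = 4 * e := by
    rw [hsq, ← he, Real.sqrt_mul (by norm_num : (0:ℝ) ≤ 2)]
    have h2 : Real.sqrt 2 * Real.sqrt 2 = 2 := Real.mul_self_sqrt (by norm_num)
    have hπ : Real.sqrt π ≠ 0 := ne_of_gt (Real.sqrt_pos.2 Real.pi_pos)
    field_simp
    linear_combination (2 * e) * h2
  rw [hD'] at hD
  have hDne : Real.sqrt (2 * π) * (erf (Real.sqrt 2 * x) + C) ≠ 0 := (hden x).ne'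
  have := hN.div hD hDne
  refine this.congr_deriv ?_
  set P := Real.sqrt (2 * π) * (erf (Real.sqrt 2 * x) + C)
  field_simp
  ring
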